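/- Let n and r be positive integers with n ≤ r. Suppose a, b_1, …, b_r are real numbers with 0 ≤ b_i ≤ a for all i and Σ_{i=1}^r b_i ≤ n·a. Then there exists a family of nonnegative real numbers (c_I), indexed by the n-element subsets I of {1, …, r}, such that Σ_I c_I = a and, for every index i ∈ {1, …, r}, Σ_{I ∋ i} c_I ≥ b_i. -/

import Mathlib

open Finset

private lemma base_case (n r : ℕ) (hn : 0 < n) (hnr : n ≤ r) (a : ℝ)
    (b : Fin r → ℝ) (hb0 : ∀ i, 0 ≤ b i) (hba : ∀ i, b i ≤ a)
    (hsum : ∑ i, b i ≤ (n : ℝ) * a)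
    (hfrac : ∀ i, b i = 0 ∨ b i = a) :
    ∃ c : {I : Finset (Fin r) // I.card = n} → ℝ,
      (∀ I, 0 ≤ c I) ∧
      (∑ I : {I : Finset (Fin r) // I.card = n}, c I) = a ∧
      ∀ i : Fin r,
        b i ≤ ∑ I ∈ Finset.univ.filter
            (fun I : {I : Finset (Fin r) // I.card = n} => i ∈ I.1), c I := by
  rcases lt_or_ge 0 a with ha | ha
  · -- a > 0
    set S : Finset (Fin r) := Finset.univ.filter (fun i => b i = a) with hS
    have hSsum : ∑ i ∈ S, b i = (S.card : ℝ) * a := by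
      rw [Finset.sum_congr rfl (fun i hi => (Finset.mem_filter.mp hi).2)]
      simp [mul_comm, hS]
    have hSle : ∑ i ∈ S, b i ≤ ∑ i, b i :=
      Finset.sum_le_sum_of_subset_of_nonneg (Finset.subset_univ S) (fun i _ _ => hb0 i)
    have hcard : S.card ≤ n := by
      have h1 : (S.card : ℝ) * a ≤ (n : ℝ) * a := by
        rw [← hSsum]; exact hSle.trans hsum
      have h2 := le_of_mul_le_mul_right h1 ha
      exact_mod_cast h2
    obtain ⟨I₀, hSI₀, hI₀⟩ := Finset.exists_superset_card_eq hcard (by simpa using hnr)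
    refine ⟨fun I => if I = ⟨I₀, hI₀⟩ then a else 0, ?_, ?_, ?_⟩
    · intro I
      show (0:ℝ) ≤ if I = ⟨I₀, hI₀⟩ then a else 0
      split <;> [exact ha.le; exact le_refl 0]
    · simp
    · intro i
      rcases hfrac i with h | h
      · rw [h]
        exact Finset.sum_nonneg fun I _ => by split <;> [exact ha.le; exact le_refl 0]
      · have hiI : i ∈ I₀ := hSI₀ (by simp [hS, h])
        have hmem : (⟨I₀, hI₀⟩ : {I : Finset (Fin r) // I.card = n}) ∈
            Finset.univ.filter (fun I : {I : Finset (Fin r) // I.card = n} => i ∈ I.1) := by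
          simp [hiI]
        calc b i = a := h
          _ ≤ _ := by
            refine Finset.single_le_sum (f := fun I => if I = (⟨I₀, hI₀⟩ : {I : Finset (Fin r) // I.card = n}) then a else 0) (fun I _ => ?_) hmem |>.trans_eq' (by simp)
            show (0:ℝ) ≤ if I = ⟨I₀, hI₀⟩ then a else 0
            split <;> [exact ha.le; exact le_refl 0]
  · -- a ≤ 0, then a = 0 and b = 0
    have ha0 : a = 0 := le_antisymm ha ((hb0 ⟨0, hn.trans_le hnr⟩).trans (hba _))
    refine ⟨fun _ => 0, fun _ => le_refl 0, by simp [ha0], fun i => ?_⟩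
    have : b i = 0 := le_antisymm (by rw [← ha0]; exact hba i) (hb0 i)
    simp [this]

private lemma aux_lemma (n r : ℕ) (hn : 0 < n) (hnr : n ≤ r) (a : ℝ) :
    ∀ k : ℕ, ∀ b : Fin r → ℝ,
      (Finset.univ.filter (fun i => 0 < b i ∧ b i < a)).card ≤ k →
      (∀ i, 0 ≤ b i) → (∀ i, b i ≤ a) → (∑ i, b i ≤ (n : ℝ) * a) →
      ∃ c : {I : Finset (Fin r) // I.card = n} → ℝ,
        (∀ I, 0 ≤ c I) ∧
        (∑ I : {I : Finset (Fin r) // I.card = n}, c I) = a ∧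
        ∀ i : Fin r,
          b i ≤ ∑ I ∈ Finset.univ.filter
              (fun I : {I : Finset (Fin r) // I.card = n} => i ∈ I.1), c I := by
  intro k
  induction k with
  | zero =>
    intro b hcard hb0 hba hsum
    refine base_case n r hn hnr a b hb0 hba hsum (fun i => ?_)
    have hempty : (Finset.univ.filter (fun i => 0 < b i ∧ b i < a)) = ∅ :=
      Finset.card_eq_zero.mp (Nat.le_zero.mp hcard)
    have hni : ¬ (0 < b i ∧ b i < a) := by
      intro h
      have : i ∈ (∅ : Finset (Fin r)) := hempty ▸ (Finset.mem_filter.mpr ⟨Finset.mem_univ i, h⟩)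
      simp at this
    rcases lt_or_eq_of_le (hb0 i) with h0 | h0
    · right
      by_contra hne
      exact hni ⟨h0, lt_of_le_of_ne (hba i) hne⟩
    · left; exact h0.symm
  | succ k ih =>
    intro b hcard hb0 hba hsum
    by_cases hall : ∀ i, b i = 0 ∨ b i = a
    · exact base_case n r hn hnr a b hb0 hba hsum hall
    push_neg at hall
    obtain ⟨i, hi0, hia⟩ := hall
    have hfi : 0 < b i ∧ b i < a :=
      ⟨lt_of_le_of_ne (hb0 i) (Ne.symm hi0), lt_of_le_of_ne (hba i) hia⟩
    have ha : 0 < a := (hb0 i).trans_lt hfi.2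
    by_cases hj : ∃ j, j ≠ i ∧ 0 < b j ∧ b j < a
    · -- two fractional coordinates: split into two endpoints
      obtain ⟨j, hji, hfj⟩ := hj
      set tp : ℝ := min (a - b i) (b j) with htp_def
      set tm : ℝ := min (b i) (a - b j) with htm_def
      have htp : 0 < tp := lt_min (by linarith [hfi.2]) hfj.1
      have htm : 0 < tm := lt_min hfi.1 (by linarith [hfj.2])
      have htp1 : tp ≤ a - b i := min_le_left _ _
      have htp2 : tp ≤ b j := min_le_right _ _
      have htm1 : tm ≤ b i := min_le_left _ _
      have htm2 : tm ≤ a - b j := min_le_right _ _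
      set bp : Fin r → ℝ :=
        fun x => b x + (if x = i then tp else 0) - (if x = j then tp else 0) with hbp_def
      set bm : Fin r → ℝ :=
        fun x => b x - (if x = i then tm else 0) + (if x = j then tm else 0) with hbm_def
      have hij : i ≠ j := fun h => hji h.symm
      have hbpi : bp i = b i + tp := by simp [hbp_def, hij]
      have hbpj : bp j = b j - tp := by simp [hbp_def, hji]
      have hbpx : ∀ x, x ≠ i → x ≠ j → bp x = b x := by
        intro x h1 h2; simp [hbp_def, h1, h2]
      have hbmi : bm i = b i - tm := by simp [hbm_def, hij]
      have hbmj : bm j = b j + tm := by simp [hbm_def, hji]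
      have hbmx : ∀ x, x ≠ i → x ≠ j → bm x = b x := by
        intro x h1 h2; simp [hbm_def, h1, h2]
      -- bounds
      have hbp0 : ∀ x, 0 ≤ bp x := by
        intro x
        by_cases h1 : x = i
        · rw [h1, hbpi]; linarith [hfi.1]
        by_cases h2 : x = j
        · rw [h2, hbpj]; linarith
        · rw [hbpx x h1 h2]; exact hb0 x
      have hbpa : ∀ x, bp x ≤ a := by
        intro x
        by_cases h1 : x = i
        · rw [h1, hbpi]; linarith
        by_cases h2 : x = j
        · rw [h2, hbpj]; linarith [hba j]
        · rw [hbpx x h1 h2]; exact hba x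
      have hbm0 : ∀ x, 0 ≤ bm x := by
        intro x
        by_cases h1 : x = i
        · rw [h1, hbmi]; linarith
        by_cases h2 : x = j
        · rw [h2, hbmj]; linarith [hfj.1]
        · rw [hbmx x h1 h2]; exact hb0 x
      have hbma : ∀ x, bm x ≤ a := by
        intro x
        by_cases h1 : x = i
        · rw [h1, hbmi]; linarith [hfi.2]
        by_cases h2 : x = j
        · rw [h2, hbmj]; linarith
        · rw [hbmx x h1 h2]; exact hba x
      -- sums
      have hsump : ∑ x, bp x = ∑ x, b x := by
        simp only [hbp_def]
        rw [Finset.sum_sub_distrib, Finset.sum_add_distrib]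
        simp
      have hsumm : ∑ x, bm x = ∑ x, b x := by
        simp only [hbm_def]
        rw [Finset.sum_add_distrib, Finset.sum_sub_distrib]
        simp
      -- cards
      have hsubp : (Finset.univ.filter (fun x => 0 < bp x ∧ bp x < a)) ⊆
          (Finset.univ.filter (fun x => 0 < b x ∧ b x < a)) := by
        intro x hx
        rw [Finset.mem_filter] at hx ⊢
        refine ⟨Finset.mem_univ x, ?_⟩
        by_cases h1 : x = i
        · rw [h1]; exact hfi
        by_cases h2 : x = j
        · rw [h2]; exact hfj
        · rw [hbpx x h1 h2] at hx; exact hx.2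
      have hsubm : (Finset.univ.filter (fun x => 0 < bm x ∧ bm x < a)) ⊆
          (Finset.univ.filter (fun x => 0 < b x ∧ b x < a)) := by
        intro x hx
        rw [Finset.mem_filter] at hx ⊢
        refine ⟨Finset.mem_univ x, ?_⟩
        by_cases h1 : x = i
        · rw [h1]; exact hfi
        by_cases h2 : x = j
        · rw [h2]; exact hfj
        · rw [hbmx x h1 h2] at hx; exact hx.2
      have hcardp : (Finset.univ.filter (fun x => 0 < bp x ∧ bp x < a)).card ≤ k := by
        have hlt : (Finset.univ.filter (fun x => 0 < bp x ∧ bp x < a)) ⊂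
            (Finset.univ.filter (fun x => 0 < b x ∧ b x < a)) := by
          refine Finset.ssubset_iff_of_subset hsubp |>.mpr ?_
          rcases le_total (a - b i) (b j) with hc | hc
          · refine ⟨i, Finset.mem_filter.mpr ⟨Finset.mem_univ i, hfi⟩, ?_⟩
            have : tp = a - b i := min_eq_left hc
            rw [Finset.mem_filter]
            push_neg
            intro _
            rw [hbpi, this]
            intro h; linarith
          · refine ⟨j, Finset.mem_filter.mpr ⟨Finset.mem_univ j, hfj⟩, ?_⟩
            have : tp = b j := min_eq_right hc
            rw [Finset.mem_filter]
            push_neg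
            intro _
            rw [hbpj, this]
            intro h; linarith
        have := Finset.card_lt_card hlt
        omega
      have hcardm : (Finset.univ.filter (fun x => 0 < bm x ∧ bm x < a)).card ≤ k := by
        have hlt : (Finset.univ.filter (fun x => 0 < bm x ∧ bm x < a)) ⊂
            (Finset.univ.filter (fun x => 0 < b x ∧ b x < a)) := by
          refine Finset.ssubset_iff_of_subset hsubm |>.mpr ?_
          rcases le_total (b i) (a - b j) with hc | hc
          · refine ⟨i, Finset.mem_filter.mpr ⟨Finset.mem_univ i, hfi⟩, ?_⟩
            have : tm = b i := min_eq_left hc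
            rw [Finset.mem_filter]
            push_neg
            intro _
            rw [hbmi, this]
            intro h; linarith
          · refine ⟨j, Finset.mem_filter.mpr ⟨Finset.mem_univ j, hfj⟩, ?_⟩
            have : tm = a - b j := min_eq_right hc
            rw [Finset.mem_filter]
            push_neg
            intro _
            rw [hbmj, this]
            intro h; linarith
        have := Finset.card_lt_card hlt
        omega
      obtain ⟨cp, hcp0, hcpsum, hcpm⟩ := ih bp hcardp hbp0 hbpa (by rw [hsump]; exact hsum)
      obtain ⟨cm, hcm0, hcmsum, hcmm⟩ := ih bm hcardm hbm0 hbma (by rw [hsumm]; exact hsum)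
      set lam : ℝ := tp / (tp + tm) with hlam_def
      have htpm : 0 < tp + tm := by linarith
      have hlam0 : 0 ≤ lam := div_nonneg htp.le htpm.le
      have hlam1 : lam ≤ 1 := (div_le_one htpm).mpr (by linarith)
      have hkey : lam * tm = (1 - lam) * tp := by
        rw [hlam_def, one_sub_div htpm.ne']
        ring
      have hcomb : ∀ x, lam * bm x + (1 - lam) * bp x = b x := by
        intro x
        by_cases h1 : x = i
        · rw [h1, hbmi, hbpi]; linear_combination -hkey
        by_cases h2 : x = j
        · rw [h2, hbmj, hbpj]; linear_combination hkey
        · rw [hbmx x h1 h2, hbpx x h1 h2]; ring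
      refine ⟨fun I => lam * cm I + (1 - lam) * cp I, ?_, ?_, ?_⟩
      · intro I
        show (0:ℝ) ≤ lam * cm I + (1 - lam) * cp I
        have h1 := mul_nonneg hlam0 (hcm0 I)
        have h2 := mul_nonneg (by linarith : (0:ℝ) ≤ 1 - lam) (hcp0 I)
        linarith
      · rw [Finset.sum_add_distrib, ← Finset.mul_sum, ← Finset.mul_sum, hcmsum, hcpsum]
        ring
      · intro x
        rw [Finset.sum_add_distrib, ← Finset.mul_sum, ← Finset.mul_sum]
        calc b x = lam * bm x + (1 - lam) * bp x := (hcomb x).symm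
          _ ≤ _ :=
            add_le_add (mul_le_mul_of_nonneg_left (hcmm x) hlam0)
              (mul_le_mul_of_nonneg_left (hcpm x) (by linarith))
    · -- i is the unique fractional coordinate: raise it to a
      push_neg at hj
      set b' : Fin r → ℝ := fun x => if x = i then a else b x with hb'_def
      have hb'x : ∀ x, x ≠ i → b' x = b x := fun x h => by simp [hb'_def, h]
      have hb'i : b' i = a := by simp [hb'_def]
      -- sum bound
      set T : Finset (Fin r) := (Finset.univ.erase i).filter (fun x => b x = a) with hT_def
      have hTsum : ∑ x ∈ Finset.univ.erase i, b x = (T.card : ℝ) * a := by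
        rw [← Finset.sum_filter_add_sum_filter_not (Finset.univ.erase i) (fun x => b x = a)]
        have h1 : ∑ x ∈ (Finset.univ.erase i).filter (fun x => b x = a), b x
            = (T.card : ℝ) * a := by
          rw [Finset.sum_congr rfl (fun x hx => (Finset.mem_filter.mp hx).2)]
          simp [hT_def, mul_comm]
        have h2 : ∑ x ∈ (Finset.univ.erase i).filter (fun x => ¬ b x = a), b x = 0 := by
          refine Finset.sum_eq_zero (fun x hx => ?_)
          rw [Finset.mem_filter, Finset.mem_erase] at hx
          rcases lt_or_eq_of_le (hb0 x) with h0 | h0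
          · exact absurd (le_antisymm (hba x) (hj x hx.1.1 h0)) hx.2
          · exact h0.symm
        rw [h1, h2, add_zero]
      have herase : ∑ x ∈ Finset.univ.erase i, b x + b i = ∑ x, b x :=
        Finset.sum_erase_add _ _ (Finset.mem_univ i)
      have hTcard : (T.card : ℝ) + 1 ≤ (n : ℝ) := by
        have h1 : (T.card : ℝ) * a + b i ≤ (n : ℝ) * a := by
          rw [← hTsum, herase]; exact hsum
        have h2 : (T.card : ℝ) * a < (n : ℝ) * a := by linarith [hfi.1]
        have h3 : (T.card : ℝ) < (n : ℝ) := lt_of_mul_lt_mul_right h2 ha.le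
        have h4 : T.card < n := by exact_mod_cast h3
        exact_mod_cast h4
      have hsum' : ∑ x, b' x ≤ (n : ℝ) * a := by
        have h1 : ∑ x ∈ Finset.univ.erase i, b' x + b' i = ∑ x, b' x :=
          Finset.sum_erase_add _ _ (Finset.mem_univ i)
        have h2 : ∑ x ∈ Finset.univ.erase i, b' x = ∑ x ∈ Finset.univ.erase i, b x :=
          Finset.sum_congr rfl (fun x hx => hb'x x (Finset.mem_erase.mp hx).1)
        rw [← h1, h2, hTsum, hb'i]
        nlinarith [hTcard, ha]
      have hb'0 : ∀ x, 0 ≤ b' x := by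
        intro x; by_cases h : x = i
        · rw [h, hb'i]; exact ha.le
        · rw [hb'x x h]; exact hb0 x
      have hb'a : ∀ x, b' x ≤ a := by
        intro x; by_cases h : x = i
        · rw [h, hb'i]
        · rw [hb'x x h]; exact hba x
      have hfrac' : ∀ x, b' x = 0 ∨ b' x = a := by
        intro x; by_cases h : x = i
        · rw [h]; right; exact hb'i
        · rw [hb'x x h]
          rcases lt_or_eq_of_le (hb0 x) with h0 | h0
          · right; exact le_antisymm (hba x) (hj x h h0)
          · left; exact h0.symm
      obtain ⟨c, hc0, hcsum, hcm⟩ := base_case n r hn hnr a b' hb'0 hb'a hsum' hfrac'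
      refine ⟨c, hc0, hcsum, fun x => ?_⟩
      refine le_trans ?_ (hcm x)
      by_cases h : x = i
      · rw [h, hb'i]; exact hba i
      · rw [hb'x x h]

/-- Real reformulation of Lemma 2.5: given `0 ≤ bᵢ ≤ a` and `∑ bᵢ ≤ n·a`,
there are nonnegative weights `c_I` on the `n`-element subsets `I` of
`{1,…,r}` with `∑ c_I = a` and `∑_{I ∋ i} c_I ≥ bᵢ` for every `i`. -/
theorem stmt_1 (n r : ℕ) (hn : 0 < n) (hnr : n ≤ r)
    (a : ℝ) (b : Fin r → ℝ)
    (hb0 : ∀ i, 0 ≤ b i) (hba : ∀ i, b i ≤ a)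
    (hsum : ∑ i, b i ≤ (n : ℝ) * a) :
    ∃ c : {I : Finset (Fin r) // I.card = n} → ℝ,
      (∀ I, 0 ≤ c I) ∧
      (∑ I : {I : Finset (Fin r) // I.card = n}, c I) = a ∧
      ∀ i : Fin r,
        b i ≤ ∑ I ∈ Finset.univ.filter
            (fun I : {I : Finset (Fin r) // I.card = n} => i ∈ I.1), c I :=
  aux_lemma n r hn hnr a (Finset.univ.filter (fun i => 0 < b i ∧ b i < a)).card b
    le_rfl hb0 hba hsum
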